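/- Let X be a Hausdorff space. If every open subspace of X is ultraparacompact, then every subspace of X is ultraparacompact. -/
import Mathlib


/-- A partition of the space `X` into (nonempty, pairwise disjoint) clopen sets. -/
def IsClopenPartition (X : Type*) [TopologicalSpace X] (P : Set (Set X)) : Prop :=
  (∀ S ∈ P, IsClopen S) ∧ (∀ S ∈ P, S.Nonempty) ∧
    (∀ S ∈ P, ∀ T ∈ P, S ≠ T → S ∩ T = ∅) ∧ ⋃₀ P = Set.univ

/-- A space is ultraparacompact if every open cover has a refinement that is a
partition of the space into clopen sets. -/
def Ultraparacompact (X : Type*) [TopologicalSpace X] : Prop :=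
  ∀ 𝒰 : Set (Set X), (∀ U ∈ 𝒰, IsOpen U) → ⋃₀ 𝒰 = Set.univ →
    ∃ P : Set (Set X), IsClopenPartition X P ∧ ∀ S ∈ P, ∃ U ∈ 𝒰, S ⊆ U

/-- A space is ultranormal if any two disjoint closed sets are separated by a clopen set. -/
def Ultranormal (X : Type*) [TopologicalSpace X] : Prop :=
  ∀ R S : Set X, IsClosed R → IsClosed S → Disjoint R S →
    ∃ C : Set X, IsClopen C ∧ R ⊆ C ∧ S ∩ C = ∅

/-- A space is zero-dimensional if the clopen sets form a basis for the topology. -/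
def ZeroDimensional (X : Type*) [TopologicalSpace X] : Prop :=
  TopologicalSpace.IsTopologicalBasis {s : Set X | IsClopen s}

/-- If every open subspace of a Hausdorff space `X` is ultraparacompact,
then every subspace of `X` is ultraparacompact. -/
theorem ultraparacompact_subspaces (X : Type*) [TopologicalSpace X] [T2Space X]
    (h : ∀ U : Set X, IsOpen U → Ultraparacompact U) :
    ∀ A : Set X, Ultraparacompact A := by
  intro A 𝒰 h𝒰open h𝒰cover
  have hV : ∀ U ∈ 𝒰, ∃ V : Set X, IsOpen V ∧ U = (Subtype.val : A → X) ⁻¹' V := by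
    intro U hU
    obtain ⟨V, hVo, hVe⟩ := isOpen_induced_iff.mp (h𝒰open U hU)
    exact ⟨V, hVo, hVe.symm⟩
  choose! V hVo hVe using hV
  set W : Set X := ⋃ U ∈ 𝒰, V U with hW
  have hWo : IsOpen W := isOpen_biUnion fun U hU => hVo U hU
  have hAW : A ⊆ W := by
    intro a ha
    have hmem : (⟨a, ha⟩ : A) ∈ ⋃₀ 𝒰 := h𝒰cover ▸ Set.mem_univ _
    obtain ⟨U, hU, haU⟩ := hmem
    rw [hVe U hU] at haU
    exact Set.mem_biUnion hU haU
  let e : A → W := fun a => ⟨a.1, hAW a.2⟩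
  have he : Continuous e := Continuous.subtype_mk continuous_subtype_val _
  set 𝒱 : Set (Set W) := (fun U => (Subtype.val : W → X) ⁻¹' (V U)) '' 𝒰 with h𝒱
  have h𝒱open : ∀ T ∈ 𝒱, IsOpen T := by
    rintro T ⟨U, hU, rfl⟩
    exact (hVo U hU).preimage continuous_subtype_val
  have h𝒱cover : ⋃₀ 𝒱 = Set.univ := by
    ext w
    simp only [Set.mem_sUnion, Set.mem_univ, iff_true]
    have hw2 := w.2
    simp only [hW, Set.mem_iUnion] at hw2
    obtain ⟨U, hU, hw⟩ := hw2
    exact ⟨_, ⟨U, hU, rfl⟩, hw⟩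
  obtain ⟨P, ⟨hPclopen, hPne, hPdisj, hPcover⟩, hPref⟩ := h W hWo 𝒱 h𝒱open h𝒱cover
  refine ⟨{Q | ∃ S ∈ P, Q = e ⁻¹' S ∧ Q.Nonempty}, ⟨?_, ?_, ?_, ?_⟩, ?_⟩
  · rintro Q ⟨S, hS, rfl, _⟩
    exact (hPclopen S hS).preimage he
  · rintro Q ⟨S, hS, rfl, hne⟩; exact hne
  · rintro Q ⟨S, hS, rfl, _⟩ Q' ⟨S', hS', rfl, _⟩ hne
    have hSS' : S ≠ S' := by rintro rfl; exact hne rfl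
    have hd := hPdisj S hS S' hS' hSS'
    rw [← Set.preimage_inter, hd, Set.preimage_empty]
  · ext a
    simp only [Set.mem_sUnion, Set.mem_univ, iff_true]
    have hmem : e a ∈ ⋃₀ P := hPcover ▸ Set.mem_univ _
    obtain ⟨S, hS, haS⟩ := hmem
    exact ⟨e ⁻¹' S, ⟨S, hS, rfl, ⟨a, haS⟩⟩, haS⟩
  · rintro Q ⟨S, hS, rfl, _⟩
    obtain ⟨T, ⟨U, hU, rfl⟩, hST⟩ := hPref S hS
    refine ⟨U, hU, fun a ha => ?_⟩
    rw [hVe U hU]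
    exact hST ha
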